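/- Let d ≥ 1, let f : ℝ^d → ℝ^d be a C^1 diffeomorphism, and let K ⊆ ℝ^d be a compact set with f(K) = K whose Lebesgue measure is m(K) = 1. Let σ ∈ K be a fixed point of f. If the statistical basin B(δ_σ) = {x ∈ K : the empirical measures μ_k(x) converge weak-star to δ_σ} has positive Lebesgue measure, then |det Df(σ)| ≤ 1. -/

import Mathlib

open MeasureTheory Filter Topology

/-- The Birkhoff average `(1/k) ∑_{l=0}^{k-1} g(f^l(x))`, i.e. the integral of the
observable `g` against the `k`-th empirical measure `μ_k(x) = (1/k) ∑_{l<k} δ_{f^l(x)}`. -/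
noncomputable def birkhoffAvg {X : Type*} (f : X → X) (g : X → ℝ) (x : X) (k : ℕ) : ℝ :=
  (∑ l ∈ Finset.range k, g (f^[l] x)) / k

/-- Let `f` be a `C¹` diffeomorphism of `ℝ^d` with a compact invariant set `K` of Lebesgue
measure `1`, and let `σ ∈ K` be a fixed point of `f`. If the statistical basin of `δ_σ`,
`B(δ_σ) = {x ∈ K : μ_k(x) → δ_σ weak-star}` (i.e. the Birkhoff averages of every
continuous function `h` converge to `h σ = ∫ h dδ_σ`), has positive Lebesgue measure,
then `|det Df(σ)| ≤ 1`. -/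
theorem abs_det_le_one_of_physical_dirac (d : ℕ) (hd : 1 ≤ d)
    (f g : EuclideanSpace ℝ (Fin d) → EuclideanSpace ℝ (Fin d))
    (hf : ContDiff ℝ 1 f) (hg : ContDiff ℝ 1 g)
    (hgf : Function.LeftInverse g f) (hfg : Function.RightInverse g f)
    (K : Set (EuclideanSpace ℝ (Fin d))) (hK : IsCompact K) (hfK : f '' K = K)
    (hvolK : volume K = 1)
    (σ : EuclideanSpace ℝ (Fin d)) (hσK : σ ∈ K) (hσ : f σ = σ)
    (hbasin : 0 < volume {x ∈ K | ∀ h : EuclideanSpace ℝ (Fin d) → ℝ, Continuous h →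
      Tendsto (birkhoffAvg f h x) atTop (𝓝 (h σ))}) :
    |(fderiv ℝ f σ).det| ≤ 1 := by
  by_contra hcontra
  push_neg at hcontra
  have hfd : Differentiable ℝ f := hf.differentiable one_ne_zero
  have hgd : Differentiable ℝ g := hg.differentiable one_ne_zero
  -- the determinant of `Df` never vanishes
  have hdet : ∀ x, (fderiv ℝ f x).det ≠ 0 := by
    intro x
    have h1 : fderiv ℝ (g ∘ f) x = (fderiv ℝ g (f x)).comp (fderiv ℝ f x) :=
      fderiv_comp x (hgd (f x)) (hfd x)
    have h2 : (g ∘ f) = id := funext hgf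
    rw [h2, fderiv_id] at h1
    have h3 : (fderiv ℝ g (f x)).det * (fderiv ℝ f x).det = 1 := by
      have := congrArg ContinuousLinearMap.det h1
      simp only [ContinuousLinearMap.det, ContinuousLinearMap.toLinearMap_comp, LinearMap.det_comp,
        ContinuousLinearMap.coe_id, LinearMap.det_id] at this
      exact this.symm
    exact right_ne_zero_of_mul_eq_one h3
  -- the observable `h₀ = log |det Df|` is continuous
  set h₀ : EuclideanSpace ℝ (Fin d) → ℝ := fun x => Real.log |(fderiv ℝ f x).det| with hh₀
  have hdetcont : Continuous fun x => (fderiv ℝ f x).det :=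
    ContinuousLinearMap.continuous_det.comp (hf.continuous_fderiv one_ne_zero)
  have hcont : Continuous h₀ :=
    Continuous.log hdetcont.abs (fun x => abs_ne_zero.2 (hdet x))
  set c : ℝ := h₀ σ with hc_def
  have hcpos : 0 < c := Real.log_pos hcontra
  -- the relevant measurable set
  set T : Set (EuclideanSpace ℝ (Fin d)) :=
    {x ∈ K | Tendsto (fun k => birkhoffAvg f h₀ x k) atTop (𝓝 c)} with hT_def
  have hiterc : ∀ l : ℕ, Continuous (f^[l]) := by
    intro l
    induction l with
    | zero => simpa using continuous_id
    | succ n ih => rw [Function.iterate_succ']; exact hf.continuous.comp ih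
  have hmeasavg : ∀ k : ℕ, Measurable fun x => birkhoffAvg f h₀ x k := by
    intro k
    apply Continuous.measurable
    unfold birkhoffAvg
    exact (continuous_finset_sum _ fun l _ => hcont.comp (hiterc l)).div_const _
  have hT : MeasurableSet T := by
    apply hK.measurableSet.inter
    exact measurableSet_tendsto (𝓝 c) hmeasavg
  have hTK : T ⊆ K := fun x hx => hx.1
  have hTpos : 0 < volume T := by
    refine lt_of_lt_of_le hbasin (measure_mono ?_)
    rintro x ⟨hxK, hx⟩
    exact ⟨hxK, hx h₀ hcont⟩
  -- iterates
  have hdiffk : ∀ k : ℕ, Differentiable ℝ (f^[k]) := by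
    intro k
    induction k with
    | zero => simpa using differentiable_id
    | succ n ih => rw [Function.iterate_succ']; exact hfd.comp ih
  have hprod : ∀ (k : ℕ) (x : EuclideanSpace ℝ (Fin d)),
      |(fderiv ℝ (f^[k]) x).det| = ∏ l ∈ Finset.range k, |(fderiv ℝ f (f^[l] x)).det| := by
    intro k
    induction k with
    | zero =>
      intro x
      simp [Function.iterate_zero, fderiv_id, ContinuousLinearMap.det, LinearMap.det_id]
    | succ n ih =>
      intro x
      rw [Function.iterate_succ']
      have h1 : fderiv ℝ (f ∘ f^[n]) x = (fderiv ℝ f (f^[n] x)).comp (fderiv ℝ (f^[n]) x) :=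
        fderiv_comp x (hfd _) (hdiffk n x)
      rw [h1, Finset.prod_range_succ, ← ih x]
      simp only [ContinuousLinearMap.det, ContinuousLinearMap.toLinearMap_comp, LinearMap.det_comp, abs_mul]
      ring
  have hKinv : ∀ x ∈ K, f x ∈ K := fun x hx => hfK ▸ Set.mem_image_of_mem f hx
  have hKiter : ∀ (k : ℕ), ∀ x ∈ K, f^[k] x ∈ K := by
    intro k
    induction k with
    | zero => intro x hx; simpa using hx
    | succ n ih =>
      intro x hx
      rw [Function.iterate_succ']
      exact hKinv _ (ih x hx)
  -- the integrands
  set F : ℕ → EuclideanSpace ℝ (Fin d) → ENNReal :=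
    fun k x => ENNReal.ofReal |(fderiv ℝ (f^[k]) x).det| with hF_def
  have hFmeas : ∀ k, Measurable (F k) := by
    intro k
    exact ENNReal.measurable_ofReal.comp
      ((ContinuousLinearMap.continuous_det.measurable.comp (measurable_fderiv ℝ (f^[k]))).abs)
  -- change of variables: the integral of F k over T is the volume of the image, at most 1
  have hCoV : ∀ k : ℕ, ∫⁻ x in T, F k x ∂volume ≤ 1 := by
    intro k
    have hinj : Set.InjOn (f^[k]) T := (hgf.injective.iterate k).injOn
    have := lintegral_abs_det_fderiv_eq_addHaar_image volume hT
      (f' := fun x => fderiv ℝ (f^[k]) x) (f := f^[k])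
      (fun x _ => ((hdiffk k x).hasFDerivAt).hasFDerivWithinAt) hinj
    rw [hF_def]
    rw [this]
    calc volume (f^[k] '' T) ≤ volume K := by
          apply measure_mono
          rintro y ⟨x, hx, rfl⟩
          exact hKiter k x (hTK hx)
      _ = 1 := hvolK
  -- pointwise divergence on T
  have hdiverge : ∀ x ∈ T, Filter.liminf (fun k => F k x) atTop = ⊤ := by
    intro x hx
    have havg : Tendsto (fun k => birkhoffAvg f h₀ x k) atTop (𝓝 c) := hx.2
    have hsum : Tendsto (fun k => ∑ l ∈ Finset.range k, h₀ (f^[l] x)) atTop atTop := by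
      have h1 : Tendsto (fun k : ℕ => (k : ℝ) * birkhoffAvg f h₀ x k) atTop atTop :=
        Filter.Tendsto.atTop_mul_pos hcpos tendsto_natCast_atTop_atTop havg
      apply h1.congr'
      filter_upwards [eventually_ge_atTop 1] with k hk
      have hk0 : (k : ℝ) ≠ 0 := Nat.cast_ne_zero.2 (by omega)
      rw [birkhoffAvg, mul_div_assoc', mul_div_cancel_left₀ _ hk0]
    have hexp : ∀ k : ℕ, |(fderiv ℝ (f^[k]) x).det|
        = Real.exp (∑ l ∈ Finset.range k, h₀ (f^[l] x)) := by
      intro k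
      rw [hprod k x, Real.exp_sum]
      refine Finset.prod_congr rfl fun l _ => ?_
      rw [hh₀]
      rw [Real.exp_log (abs_pos.2 (hdet _))]
    have htop : Tendsto (fun k => F k x) atTop (𝓝 ⊤) := by
      have : Tendsto (fun k => ENNReal.ofReal
          (Real.exp (∑ l ∈ Finset.range k, h₀ (f^[l] x)))) atTop (𝓝 ⊤) :=
        ENNReal.tendsto_ofReal_atTop.comp (Real.tendsto_exp_atTop.comp hsum)
      refine this.congr fun k => ?_
      simp only [hF_def]
      rw [hexp k]
    exact htop.liminf_eq
  -- Fatou's lemma yields a contradiction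
  have fatou : ∫⁻ x in T, Filter.liminf (fun k => F k x) atTop ∂volume
      ≤ Filter.liminf (fun k => ∫⁻ x in T, F k x ∂volume) atTop :=
    lintegral_liminf_le hFmeas
  have hlhs : ∫⁻ x in T, Filter.liminf (fun k => F k x) atTop ∂volume = ⊤ := by
    rw [setLIntegral_congr_fun hT (fun x hx => hdiverge x hx)]
    rw [setLIntegral_const]
    exact ENNReal.top_mul hTpos.ne'
  have hrhs : Filter.liminf (fun k => ∫⁻ x in T, F k x ∂volume) atTop ≤ 1 := by
    have := Filter.liminf_le_liminf (f := atTop)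
      (u := fun k => ∫⁻ x in T, F k x ∂volume) (v := fun _ : ℕ => (1 : ENNReal))
      (Eventually.of_forall hCoV)
    simpa using this
  rw [hlhs] at fatou
  exact absurd (le_trans fatou hrhs) (by simp)
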